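/- The Hausdorff mapping H : (compact metric spaces with Gromov–Hausdorff distance) → (compact metric spaces), sending X to its hyperspace of nonempty closed subsets with the Hausdorff metric, is nonexpanding but not a contraction: it is 1-Lipschitz, and for any constant C < 1 there exist compacta X, Y with d_GH(H(X), H(Y)) > C · d_GH(X, Y). -/

import Mathlib

open Metric Set TopologicalSpace GromovHausdorff

instance {α : Type*} [TopologicalSpace α] [Nonempty α] :
    Nonempty (NonemptyCompacts α) :=
  ⟨⟨⟨{Classical.arbitrary α}, isCompact_singleton⟩, Set.singleton_nonempty _⟩⟩

/-- The Hausdorff mapping on the Gromov–Hausdorff space, sending a compact metric space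
to its hyperspace of nonempty closed subsets with the Hausdorff metric. -/
noncomputable def HausdorffMap : GHSpace → GHSpace :=
  fun X => toGHSpace (NonemptyCompacts X.Rep)

section Aux

variable {X : Type*} {Y : Type*} {Z : Type*} [MetricSpace X] [MetricSpace Y] [MetricSpace Z]

/-- The image of a nonempty compact set under an isometry. -/
def myMap (Φ : X → Z) (hΦ : Isometry Φ) (K : NonemptyCompacts X) : NonemptyCompacts Z :=
  ⟨⟨Φ '' K, K.isCompact.image hΦ.continuous⟩, K.nonempty.image _⟩

lemma myMap_coe (Φ : X → Z) (hΦ : Isometry Φ) (K : NonemptyCompacts X) :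
    (myMap Φ hΦ K : Set Z) = Φ '' K := rfl

lemma myMap_isometry (Φ : X → Z) (hΦ : Isometry Φ) : Isometry (myMap Φ hΦ) :=
  Isometry.of_dist_eq fun s t => by
    simp only [NonemptyCompacts.dist_eq, myMap_coe]
    exact hausdorffDist_image hΦ

/-- An isometry equivalence between spaces induces one between hyperspaces. -/
noncomputable def myCongr (e : X ≃ᵢ Y) : NonemptyCompacts X ≃ᵢ NonemptyCompacts Y where
  toFun := myMap e e.isometry
  invFun := myMap e.symm e.symm.isometry
  left_inv := fun K => NonemptyCompacts.ext <| by
    simp only [myMap_coe]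
    ext x
    simp
  right_inv := fun K => NonemptyCompacts.ext <| by
    simp only [myMap_coe]
    ext x
    simp
  isometry_toFun := myMap_isometry e e.isometry

variable [CompactSpace X] [Nonempty X] [CompactSpace Y] [Nonempty Y]

/-- Key step: given isometric embeddings of `X` and `Y` into `Z`, for every compact in `X`
there is a compact in `Y` whose image is Hausdorff-close to the image of the first one. -/
lemma exists_close (Φ : X → Z) (hΦ : Isometry Φ) (Ψ : Y → Z) (hΨ : Isometry Ψ)
    (P : NonemptyCompacts X) :
    ∃ Q : NonemptyCompacts Y,
      dist (myMap Φ hΦ P) (myMap Ψ hΨ Q) ≤ hausdorffDist (range Φ) (range Ψ) := by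
  set r := hausdorffDist (range Φ) (range Ψ) with hrdef
  have hr0 : 0 ≤ r := hausdorffDist_nonneg
  have hΦc : IsCompact (range Φ) := isCompact_range hΦ.continuous
  have hΨc : IsCompact (range Ψ) := isCompact_range hΨ.continuous
  have hfin : EMetric.hausdorffEdist (range Φ) (range Ψ) ≠ ⊤ :=
    hausdorffEdist_ne_top_of_nonempty_of_bounded (range_nonempty _) (range_nonempty _)
      hΦc.isBounded hΨc.isBounded
  set A : Set Z := Φ '' P with hAdef
  -- every point of `A` admits a point of `range Ψ` within distance `r`
  have step : ∀ a ∈ A, ∃ b ∈ range Ψ, dist a b ≤ r ∧ infDist b A ≤ r := by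
    intro a ha
    have haΦ : a ∈ range Φ := by
      rcases ha with ⟨x, _, rfl⟩
      exact mem_range_self x
    have h1 : infDist a (range Ψ) ≤ r := infDist_le_hausdorffDist_of_mem haΦ hfin
    obtain ⟨b, hb, hbd⟩ := hΨc.exists_infDist_eq_dist (range_nonempty _) a
    refine ⟨b, hb, by rw [← hbd]; exact h1, ?_⟩
    have : infDist b A ≤ dist b a := infDist_le_dist_of_mem ha
    calc infDist b A ≤ dist b a := this
      _ = dist a b := dist_comm _ _
      _ ≤ r := by rw [← hbd]; exact h1
  -- the candidate set in `Z`
  set S : Set Z := range Ψ ∩ {z | infDist z A ≤ r} with hSdef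
  have hSsub : S ⊆ range Ψ := inter_subset_left
  have hSclosed : IsClosed S :=
    hΨc.isClosed.inter (isClosed_le (continuous_infDist_pt A) continuous_const)
  have hScompact : IsCompact S := hΨc.inter_right
    (isClosed_le (continuous_infDist_pt A) continuous_const)
  have hSne : S.Nonempty := by
    obtain ⟨x, hx⟩ := P.nonempty
    obtain ⟨b, hb, _, hbA⟩ := step (Φ x) ⟨x, hx, rfl⟩
    exact ⟨b, hb, hbA⟩
  -- pull back to `Y`
  have hpre_compact : IsCompact (Ψ ⁻¹' S) := (hSclosed.preimage hΨ.continuous).isCompact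
  have hpre_ne : (Ψ ⁻¹' S).Nonempty := by
    obtain ⟨b, hb⟩ := hSne
    obtain ⟨y, rfl⟩ := hSsub hb
    exact ⟨y, hb⟩
  refine ⟨⟨⟨Ψ ⁻¹' S, hpre_compact⟩, hpre_ne⟩, ?_⟩
  have himg : (myMap Ψ hΨ ⟨⟨Ψ ⁻¹' S, hpre_compact⟩, hpre_ne⟩ : Set Z) = S := by
    rw [myMap_coe]
    change Ψ '' (Ψ ⁻¹' S) = S
    rw [Set.image_preimage_eq_inter_range, Set.inter_eq_left.2 hSsub]
  rw [NonemptyCompacts.dist_eq, himg, myMap_coe]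
  refine hausdorffDist_le_of_infDist hr0 ?_ ?_
  · intro a ha
    obtain ⟨b, hb, hab, hbA⟩ := step a ha
    have hbS : b ∈ S := ⟨hb, hbA⟩
    exact le_trans (infDist_le_dist_of_mem hbS) hab
  · intro z hz
    exact hz.2

/-- The Hausdorff mapping does not increase the Gromov–Hausdorff distance. -/
lemma ghDist_hyper_le :
    ghDist (NonemptyCompacts X) (NonemptyCompacts Y) ≤ ghDist X Y := by
  let Φ := optimalGHInjl X Y
  let Ψ := optimalGHInjr X Y
  have hΦ : Isometry Φ := isometry_optimalGHInjl X Y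
  have hΨ : Isometry Ψ := isometry_optimalGHInjr X Y
  have hropt : hausdorffDist (range Φ) (range Ψ) = ghDist X Y := hausdorffDist_optimal
  have hr0 : 0 ≤ hausdorffDist (range Φ) (range Ψ) := hausdorffDist_nonneg
  have key : hausdorffDist (range (myMap Φ hΦ)) (range (myMap Ψ hΨ)) ≤
      hausdorffDist (range Φ) (range Ψ) := by
    refine hausdorffDist_le_of_mem_dist hr0 ?_ ?_
    · rintro _ ⟨P, rfl⟩
      obtain ⟨Q, hQ⟩ := exists_close Φ hΦ Ψ hΨ P
      exact ⟨myMap Ψ hΨ Q, mem_range_self _, hQ⟩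
    · rintro _ ⟨Q, rfl⟩
      obtain ⟨P, hP⟩ := exists_close Ψ hΨ Φ hΦ Q
      refine ⟨myMap Φ hΦ P, mem_range_self _, ?_⟩
      rw [hausdorffDist_comm] at hP
      exact hP
  calc ghDist (NonemptyCompacts X) (NonemptyCompacts Y)
      ≤ hausdorffDist (range (myMap Φ hΦ)) (range (myMap Ψ hΨ)) :=
        ghDist_le_hausdorffDist (myMap_isometry Φ hΦ) (myMap_isometry Ψ hΨ)
    _ ≤ hausdorffDist (range Φ) (range Ψ) := key
    _ = ghDist X Y := hropt

end Aux

lemma HausdorffMap_toGHSpace {A : Type*} [MetricSpace A] [CompactSpace A] [Nonempty A] :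
    HausdorffMap (toGHSpace A) = toGHSpace (NonemptyCompacts A) := by
  have h : toGHSpace ((toGHSpace A).Rep) = toGHSpace A := GHSpace.toGHSpace_rep _
  obtain ⟨e⟩ := toGHSpace_eq_toGHSpace_iff_isometryEquiv.1 h
  exact toGHSpace_eq_toGHSpace_iff_isometryEquiv.2 ⟨myCongr e⟩

theorem stmt_8 :
    LipschitzWith 1 HausdorffMap ∧
      ∀ C : ℝ, C < 1 → ∃ X Y : GHSpace,
        dist (HausdorffMap X) (HausdorffMap Y) > C * dist X Y := by
  constructor
  · -- the Lipschitz part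
    refine LipschitzWith.of_dist_le_mul fun p q => ?_
    simp only [NNReal.coe_one, one_mul]
    rw [dist_ghDist p q]
    exact ghDist_hyper_le
  · -- the non-contraction part
    intro C hC
    -- the two-point space
    set T : Set ℝ := {0, 1} with hT
    have hTc : IsCompact T := ((Set.finite_singleton (1:ℝ)).insert 0).isCompact
    haveI : CompactSpace T := isCompact_iff_compactSpace.1 hTc
    have h0T : (0 : ℝ) ∈ T := by simp [hT]
    have h1T : (1 : ℝ) ∈ T := by simp [hT]
    haveI : Nonempty T := ⟨⟨0, h0T⟩⟩
    refine ⟨toGHSpace PUnit.{1}, toGHSpace T, ?_⟩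
    set X := toGHSpace PUnit.{1} with hXdef
    set Y := toGHSpace T with hYdef
    let p0 : T := ⟨0, h0T⟩
    let p1 : T := ⟨1, h1T⟩
    have hp01 : dist p0 p1 = 1 := by
      rw [Subtype.dist_eq]
      simp [Real.dist_eq, p0, p1]
    -- upper bound on `dist X Y`
    have hub : dist X Y ≤ 1 / 2 := by
      have hΦ : Isometry (fun _ : PUnit.{1} => (1 / 2 : ℝ)) := fun a b => by
        rw [Subsingleton.elim a b, edist_self, edist_self]
      have hΨ : Isometry (Subtype.val : T → ℝ) := isometry_subtype_coe
      have hle := ghDist_le_hausdorffDist hΦ hΨ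
      have hr1 : range (fun _ : PUnit.{1} => (1 / 2 : ℝ)) = {1 / 2} := range_const
      have hr2 : range (Subtype.val : T → ℝ) = T := Subtype.range_coe
      rw [hr1, hr2] at hle
      have hXY : dist X Y = ghDist PUnit.{1} T := rfl
      rw [hXY]
      refine le_trans hle (hausdorffDist_le_of_mem_dist (by norm_num) ?_ ?_)
      · intro x hx
        rw [mem_singleton_iff] at hx
        subst hx
        exact ⟨0, h0T, by rw [Real.dist_eq, abs_le]; constructor <;> norm_num⟩
      · intro y hy
        refine ⟨1 / 2, mem_singleton _, ?_⟩
        have : y = 0 ∨ y = 1 := by simpa [hT] using hy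
        rcases this with rfl | rfl <;> (rw [Real.dist_eq, abs_le]; constructor <;> norm_num)
    -- positivity of `dist X Y`
    have hne : X ≠ Y := by
      intro h
      obtain ⟨e⟩ := toGHSpace_eq_toGHSpace_iff_isometryEquiv.1 h
      obtain ⟨a, ha⟩ := e.surjective p0
      obtain ⟨b, hb⟩ := e.surjective p1
      have h01 : p0 = p1 := by rw [← ha, ← hb, Subsingleton.elim a b]
      have : (0 : ℝ) = 1 := congrArg Subtype.val h01
      norm_num at this
    have hpos : 0 < dist X Y := dist_pos.2 hne
    -- the hyperspace of the one-point space is a one-point space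
    haveI hss : Subsingleton (NonemptyCompacts PUnit.{1}) := ⟨fun K K' => by
      apply NonemptyCompacts.ext
      ext x
      obtain ⟨a, ha⟩ := K.nonempty
      obtain ⟨b, hb⟩ := K'.nonempty
      constructor
      · intro _; exact (Subsingleton.elim b x) ▸ hb
      · intro _; exact (Subsingleton.elim a x) ▸ ha⟩
    have hHX : HausdorffMap X = toGHSpace (NonemptyCompacts PUnit.{1}) := HausdorffMap_toGHSpace
    have hHY : HausdorffMap Y = toGHSpace (NonemptyCompacts T) := HausdorffMap_toGHSpace
    -- lower bound on the distance between hyperspaces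
    have hlb : (1 : ℝ) / 2 ≤ dist (HausdorffMap X) (HausdorffMap Y) := by
      rw [hHX, hHY]
      have hrw : dist (toGHSpace (NonemptyCompacts PUnit.{1})) (toGHSpace (NonemptyCompacts T))
          = ghDist (NonemptyCompacts PUnit.{1}) (NonemptyCompacts T) := rfl
      rw [hrw, ← hausdorffDist_optimal]
      set Φ := optimalGHInjl (NonemptyCompacts PUnit.{1}) (NonemptyCompacts T) with hΦdef
      set Ψ := optimalGHInjr (NonemptyCompacts PUnit.{1}) (NonemptyCompacts T) with hΨdef
      have hΦ : Isometry Φ := isometry_optimalGHInjl _ _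
      have hΨ : Isometry Ψ := isometry_optimalGHInjr _ _
      have hfin : EMetric.hausdorffEdist (range Ψ) (range Φ) ≠ ⊤ :=
        hausdorffEdist_ne_top_of_nonempty_of_bounded (range_nonempty _) (range_nonempty _)
          (isCompact_range hΨ.continuous).isBounded (isCompact_range hΦ.continuous).isBounded
      obtain ⟨P0⟩ : Nonempty (NonemptyCompacts PUnit.{1}) := inferInstance
      have hrange : range Φ = {Φ P0} :=
        Set.eq_singleton_iff_unique_mem.2
          ⟨mem_range_self _, by rintro _ ⟨K, rfl⟩; rw [Subsingleton.elim K P0]⟩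
      set K0 : NonemptyCompacts T := ⟨⟨{p0}, isCompact_singleton⟩, singleton_nonempty _⟩ with hK0
      set K1 : NonemptyCompacts T := ⟨⟨{p1}, isCompact_singleton⟩, singleton_nonempty _⟩ with hK1
      have hd01 : 1 ≤ dist K0 K1 := by
        rw [NonemptyCompacts.dist_eq]
        have h := infDist_le_hausdorffDist_of_mem (mem_singleton p0)
          (hausdorffEdist_ne_top_of_nonempty_of_bounded (singleton_nonempty p0)
            (singleton_nonempty p1) Bornology.isBounded_singleton Bornology.isBounded_singleton)
        rw [infDist_singleton, hp01] at h
        exact h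
      have hi0 : dist (Ψ K0) (Φ P0) ≤ hausdorffDist (range Φ) (range Ψ) := by
        have h := infDist_le_hausdorffDist_of_mem (mem_range_self K0) hfin
        calc dist (Ψ K0) (Φ P0) = infDist (Ψ K0) (range Φ) := by
              rw [hrange, infDist_singleton]
          _ ≤ hausdorffDist (range Ψ) (range Φ) := h
          _ = hausdorffDist (range Φ) (range Ψ) := hausdorffDist_comm
      have hi1 : dist (Ψ K1) (Φ P0) ≤ hausdorffDist (range Φ) (range Ψ) := by
        have h := infDist_le_hausdorffDist_of_mem (mem_range_self K1) hfin
        calc dist (Ψ K1) (Φ P0) = infDist (Ψ K1) (range Φ) := by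
              rw [hrange, infDist_singleton]
          _ ≤ hausdorffDist (range Ψ) (range Φ) := h
          _ = hausdorffDist (range Φ) (range Ψ) := hausdorffDist_comm
      have htri : dist K0 K1 ≤ dist (Ψ K0) (Φ P0) + dist (Ψ K1) (Φ P0) := by
        rw [← hΨ.dist_eq K0 K1]
        calc dist (Ψ K0) (Ψ K1) ≤ dist (Ψ K0) (Φ P0) + dist (Φ P0) (Ψ K1) := dist_triangle _ _ _
          _ = dist (Ψ K0) (Φ P0) + dist (Ψ K1) (Φ P0) := by rw [dist_comm (Φ P0)]
      linarith
    -- conclusion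
    have hC' : C * dist X Y < dist X Y := by
      have h := mul_lt_mul_of_pos_right hC hpos
      rwa [one_mul] at h
    calc C * dist X Y < dist X Y := hC'
      _ ≤ 1 / 2 := hub
      _ ≤ dist (HausdorffMap X) (HausdorffMap Y) := hlb
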